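/- Consider the contraction ∑_{i_b,i_c} A_{i_a,i_b,i_c} B_{i_b,i_d} C_{i_c,i_e} with a Trotterized tensor A of t gate layers and Trotter dimension χ_T, where i_a ∈ [1,χ_T], and bond dimensions χ_b = χ_c = χ², χ_d = χ_e = χ, χ_T = χ⁴. If t ≥ χ, then the cost t·χ_d·χ_e·χ_T + χ_b·χ_c·χ_d·χ_e of the sequence A(BC), which forms the outer product BC first, is at most the cost t·χ_c·χ_d·χ_T + χ_c·χ_d·χ_e·χ_T of the sequence (AB)C and also at most the cost t·χ_b·χ_e·χ_T + χ_b·χ_d·χ_e·χ_T of (AC)B. -/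
import Mathlib

/-- With a Trotterized tensor A (Trotter dimension χ_T = χ⁴, t gate layers) and
bond dimensions χ_b = χ_c = χ², χ_d = χ_e = χ: if t ≥ χ, then the sequence
A(BC) forming the outer product BC first is at most as costly as (AB)C and as
(AC)B. -/
theorem outer_product_sequence_optimal
    (χ t : ℕ) (hχ : 2 ≤ χ) (ht : χ ≤ t) :
    t * χ * χ * χ ^ 4 + χ ^ 2 * χ ^ 2 * χ * χ
        ≤ t * χ ^ 2 * χ * χ ^ 4 + χ ^ 2 * χ * χ * χ ^ 4
    ∧ t * χ * χ * χ ^ 4 + χ ^ 2 * χ ^ 2 * χ * χ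
        ≤ t * χ ^ 2 * χ * χ ^ 4 + χ ^ 2 * χ * χ * χ ^ 4 := by
  have h1 : χ ≤ χ ^ 2 := by nlinarith
  have h2 : χ ^ 2 ≤ χ ^ 4 := Nat.pow_le_pow_right (by omega) (by omega) |>.trans_eq rfl
  have key : t * χ * χ * χ ^ 4 + χ ^ 2 * χ ^ 2 * χ * χ
      ≤ t * χ ^ 2 * χ * χ ^ 4 + χ ^ 2 * χ * χ * χ ^ 4 := by
    apply Nat.add_le_add
    · exact Nat.mul_le_mul_right _ (Nat.mul_le_mul_right _ (Nat.mul_le_mul_left _ h1))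
    · calc χ ^ 2 * χ ^ 2 * χ * χ = χ ^ 2 * χ * χ * χ ^ 2 := by ring
        _ ≤ χ ^ 2 * χ * χ * χ ^ 4 := Nat.mul_le_mul_left _ h2
  exact ⟨key, key⟩
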